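/- arXiv:1411.1648 — 4 statements merged into one kernel-verified Lean document; each statement's English description precedes it below -/
import Mathlib

section
/- If ω is a radial weight on the unit disc such that there exists C ≥ 1 with ŵ(r) ≤ C·ŵ((1+r)/2) for all 0 ≤ r < 1 (where ŵ(r) = ∫_r^1 ω(s) ds), then there exist constants C' > 0 and β > 0 such that ŵ(r) ≤ C'·((1-r)/(1-t))^β · ŵ(t) for all 0 ≤ r ≤ t < 1. -/
open MeasureTheory Set

/-- A radial doubling weight satisfies the power-type doubling estimate
ŵ(r) ≤ C'·((1-r)/(1-t))^β·ŵ(t) for 0 ≤ r ≤ t < 1. -/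
theorem stmt0 (ω : ℝ → ℝ) (hpos : ∀ s ∈ Set.Ico (0:ℝ) 1, 0 ≤ ω s)
    (hint : MeasureTheory.IntegrableOn ω (Set.Ico 0 1))
    (C : ℝ) (hC : 1 ≤ C)
    (hdbl : ∀ r : ℝ, 0 ≤ r → r < 1 →
      (∫ s in r..1, ω s) ≤ C * ∫ s in ((1 + r) / 2)..1, ω s) :
    ∃ C' > (0:ℝ), ∃ β > (0:ℝ), ∀ r t : ℝ, 0 ≤ r → r ≤ t → t < 1 →
      (∫ s in r..1, ω s) ≤ C' * ((1 - r) / (1 - t)) ^ β * ∫ s in t..1, ω s := by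
  have hIcc : IntegrableOn ω (Set.Icc 0 1) :=
    (integrableOn_Icc_iff_integrableOn_Ico).mpr hint
  have hII : ∀ a b : ℝ, 0 ≤ a → a ≤ b → b ≤ 1 → IntervalIntegrable ω volume a b := by
    intro a b ha hab hb
    have : IntegrableOn ω (Set.Icc a b) := hIcc.mono_set (Icc_subset_Icc ha hb)
    rw [intervalIntegrable_iff_integrableOn_Icc_of_le hab]
    exact this
  have hae : ∀ᵐ s : ℝ, s ∈ Set.Icc (0:ℝ) 1 → 0 ≤ ω s := by
    have h1 : ∀ᵐ s : ℝ, s ∉ ({1} : Set ℝ) :=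
      measure_eq_zero_iff_ae_notMem.mp (measure_singleton 1)
    filter_upwards [h1] with s hs hmem
    exact hpos s ⟨hmem.1, lt_of_le_of_ne hmem.2 (by simpa using hs)⟩
  have hnn : ∀ a b : ℝ, 0 ≤ a → a ≤ b → b ≤ 1 → 0 ≤ ∫ s in a..b, ω s := by
    intro a b ha hab hb
    apply intervalIntegral.integral_nonneg_of_ae_restrict hab
    have hres : ∀ᵐ s ∂(volume.restrict (Icc a b)), 0 ≤ ω s := by
      rw [ae_restrict_iff' measurableSet_Icc]
      filter_upwards [hae] with s hs hsab
      exact hs ⟨le_trans ha hsab.1, le_trans hsab.2 hb⟩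
    exact hres
  have hmono : ∀ a b : ℝ, 0 ≤ a → a ≤ b → b ≤ 1 →
      (∫ s in b..1, ω s) ≤ ∫ s in a..1, ω s := by
    intro a b ha hab hb
    have h1 : (∫ s in a..b, ω s) + (∫ s in b..1, ω s) = ∫ s in a..1, ω s :=
      intervalIntegral.integral_add_adjacent_intervals (hII a b ha hab hb)
        (hII b 1 (ha.trans hab) hb le_rfl)
    have h2 := hnn a b ha hab hb
    linarith
  set D := C + 1 with hDdef
  have hD1 : 1 < D := by simp only [hDdef]; linarith
  have hD0 : 0 < D := by linarith
  have hdbl' : ∀ r : ℝ, 0 ≤ r → r < 1 →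
      (∫ s in r..1, ω s) ≤ D * ∫ s in ((1 + r) / 2)..1, ω s := by
    intro r hr hr1
    have hm0 : (0:ℝ) ≤ (1 + r) / 2 := by linarith
    have hm1 : (1 + r) / 2 ≤ 1 := by linarith
    have h2 := hnn ((1 + r) / 2) 1 hm0 hm1 le_rfl
    calc (∫ s in r..1, ω s) ≤ C * ∫ s in ((1 + r) / 2)..1, ω s := hdbl r hr hr1
      _ ≤ D * ∫ s in ((1 + r) / 2)..1, ω s := by
          simp only [hDdef]; nlinarith
  have hiter : ∀ n : ℕ, ∀ r : ℝ, 0 ≤ r → r < 1 →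
      (∫ s in r..1, ω s) ≤ D ^ n * ∫ s in (1 - (1 - r) / 2 ^ n)..1, ω s := by
    intro n
    induction n with
    | zero => intro r hr hr1; norm_num
    | succ n ih =>
      intro r hr hr1
      have hm0 : (0:ℝ) ≤ (1 + r) / 2 := by linarith
      have hm1 : (1 + r) / 2 < 1 := by linarith
      have h2 : (1 : ℝ) - (1 - (1 + r) / 2) / 2 ^ n = 1 - (1 - r) / 2 ^ (n + 1) := by
        have h2n : (2:ℝ) ^ n ≠ 0 := by positivity
        field_simp
        ring
      have hstep := ih ((1 + r) / 2) hm0 hm1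
      rw [h2] at hstep
      calc (∫ s in r..1, ω s) ≤ D * ∫ s in ((1 + r) / 2)..1, ω s := hdbl' r hr hr1
        _ ≤ D * (D ^ n * ∫ s in (1 - (1 - r) / 2 ^ (n + 1))..1, ω s) :=
            mul_le_mul_of_nonneg_left hstep hD0.le
        _ = D ^ (n + 1) * ∫ s in (1 - (1 - r) / 2 ^ (n + 1))..1, ω s := by ring
  refine ⟨D, hD0, Real.logb 2 D, Real.logb_pos one_lt_two hD1, ?_⟩
  intro r t hr hrt ht1
  set x := (1 - r) / (1 - t) with hx
  have ht0 : 0 ≤ t := hr.trans hrt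
  have h1t : 0 < 1 - t := by linarith
  have hr1 : r < 1 := lt_of_le_of_lt hrt ht1
  have hx1 : 1 ≤ x := by rw [hx, le_div_iff₀ h1t]; linarith
  have hx0 : 0 < x := lt_of_lt_of_le one_pos hx1
  set n := ⌈Real.logb 2 x⌉₊ with hn
  have hlogx0 : 0 ≤ Real.logb 2 x := Real.logb_nonneg one_lt_two hx1
  have hxle : x ≤ 2 ^ n := by
    have h := Nat.le_ceil (Real.logb 2 x)
    calc x = 2 ^ Real.logb 2 x := (Real.rpow_logb two_pos (by norm_num) hx0).symm
      _ ≤ 2 ^ (n : ℝ) := Real.rpow_le_rpow_of_exponent_le one_le_two h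
      _ = 2 ^ n := by rw [Real.rpow_natCast]
  have h2n : (0:ℝ) < 2 ^ n := by positivity
  have htle : t ≤ 1 - (1 - r) / 2 ^ n := by
    have hle : (1 - r) / 2 ^ n ≤ 1 - t := by
      rw [div_le_iff₀ h2n]
      have := (div_le_iff₀ h1t).mp hxle
      nlinarith
    linarith
  have hy1 : 1 - (1 - r) / 2 ^ n ≤ 1 := by
    have : 0 < (1 - r) / 2 ^ n := div_pos (by linarith) h2n
    linarith
  have hWm := hmono t (1 - (1 - r) / 2 ^ n) ht0 htle hy1
  have hWt0 : 0 ≤ ∫ s in t..1, ω s := hnn t 1 ht0 ht1.le le_rfl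
  have key : (∫ s in r..1, ω s) ≤ D ^ n * ∫ s in t..1, ω s :=
    (hiter n r hr hr1).trans (mul_le_mul_of_nonneg_left hWm (by positivity))
  have hDn : (D : ℝ) ^ n ≤ D * x ^ Real.logb 2 D := by
    have h1 : (n : ℝ) ≤ Real.logb 2 x + 1 := (Nat.ceil_lt_add_one hlogx0).le
    rw [← Real.rpow_natCast D n]
    calc D ^ (n : ℝ) ≤ D ^ (Real.logb 2 x + 1) :=
          Real.rpow_le_rpow_of_exponent_le hD1.le h1
      _ = D ^ Real.logb 2 x * D := by rw [Real.rpow_add hD0, Real.rpow_one]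
      _ = D * x ^ Real.logb 2 D := by
          rw [Real.rpow_def_of_pos hD0, Real.rpow_def_of_pos hx0, Real.logb, Real.logb]
          ring_nf
  calc (∫ s in r..1, ω s) ≤ D ^ n * ∫ s in t..1, ω s := key
    _ ≤ (D * x ^ Real.logb 2 D) * ∫ s in t..1, ω s :=
        mul_le_mul_of_nonneg_right hDn hWt0
    _ = D * ((1 - r) / (1 - t)) ^ Real.logb 2 D * ∫ s in t..1, ω s := by rw [hx]
end

section
/- Let ω be a radial weight with ŵ(r) = ∫_r^1 ω(s) ds satisfying the doubling condition ŵ(r) ≤ C·ŵ((1+r)/2). Then there exist constants C' > 0 and γ₀ > 0 such that for all γ ≥ γ₀ and all 0 ≤ t < 1, ∫_0^t ((1-t)/(1-s))^γ ω(s) ds ≤ C'·ŵ(t). -/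
open MeasureTheory Set

/-- For a radial doubling weight ω there are C' > 0 and γ₀ > 0 such that
∫_0^t ((1-t)/(1-s))^γ ω(s) ds ≤ C'·ŵ(t) for all γ ≥ γ₀ and 0 ≤ t < 1. -/
theorem stmt2 (ω : ℝ → ℝ) (hpos : ∀ s ∈ Set.Ico (0:ℝ) 1, 0 ≤ ω s)
    (hint : MeasureTheory.IntegrableOn ω (Set.Ico 0 1))
    (C : ℝ) (hC : 1 ≤ C)
    (hdbl : ∀ r : ℝ, 0 ≤ r → r < 1 →
      (∫ s in r..1, ω s) ≤ C * ∫ s in ((1 + r) / 2)..1, ω s) :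
    ∃ C' > (0:ℝ), ∃ γ₀ > (0:ℝ), ∀ γ : ℝ, γ₀ ≤ γ → ∀ t : ℝ, 0 ≤ t → t < 1 →
      (∫ s in (0:ℝ)..t, ((1 - t) / (1 - s)) ^ γ * ω s) ≤ C' * ∫ s in t..1, ω s := by
  have hC0 : (0:ℝ) < C := lt_of_lt_of_le one_pos hC
  set γ₀ : ℝ := Real.logb 2 (2*C) with hγ₀def
  have hγ₀1 : (1:ℝ) ≤ γ₀ := by
    rw [hγ₀def]
    calc (1:ℝ) = Real.logb 2 2 := (Real.logb_self_eq_one (by norm_num)).symm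
    _ ≤ Real.logb 2 (2*C) := by
        apply Real.logb_le_logb_of_le (by norm_num) (by norm_num) (by linarith)
  have h_half : ((1:ℝ)/2) ^ γ₀ = (2*C)⁻¹ := by
    rw [hγ₀def, one_div, Real.inv_rpow (by norm_num), Real.rpow_logb (by norm_num) (by norm_num) (by linarith)]
  -- integrability of ω on subintervals
  have hω1 : IntervalIntegrable ω volume 0 1 := by
    rw [intervalIntegrable_iff_integrableOn_Ioc_of_le (by norm_num)]
    rw [integrableOn_Ioc_iff_integrableOn_Ioo]
    exact hint.mono_set (fun s hs => ⟨hs.1.le, hs.2⟩)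
  have h_sub : ∀ a b : ℝ, 0 ≤ a → a ≤ b → b ≤ 1 → IntervalIntegrable ω volume a b := by
    intro a b ha hab hb
    apply hω1.mono_set
    rw [Set.uIcc_of_le hab, Set.uIcc_of_le (zero_le_one' ℝ)]
    exact Set.Icc_subset_Icc ha hb
  have h_nonneg : ∀ a b : ℝ, 0 ≤ a → a ≤ b → b ≤ 1 → 0 ≤ ∫ s in a..b, ω s := by
    intro a b ha hab hb
    apply intervalIntegral.integral_nonneg_of_ae_restrict hab
    have h1 : ∀ᵐ s ∂(volume.restrict (Set.Icc a b)), s ∈ Set.Icc a b :=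
      ae_restrict_mem measurableSet_Icc
    have h2 : ∀ᵐ s ∂(volume.restrict (Set.Icc a b)), s ≠ 1 := by
      apply Filter.Eventually.filter_mono (ae_mono Measure.restrict_le_self)
      rw [MeasureTheory.ae_iff]
      have : {s : ℝ | ¬ s ≠ 1} = {1} := by ext x; simp
      rw [this]; exact measure_singleton 1
    filter_upwards [h1, h2] with s hs hs1
    exact hpos s ⟨le_trans ha hs.1, lt_of_le_of_ne (le_trans hs.2 hb) hs1⟩
  have h_w_mono : ∀ a b : ℝ, 0 ≤ a → a ≤ b → b ≤ 1 →
      (∫ s in b..1, ω s) ≤ ∫ s in a..1, ω s := by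
    intro a b ha hab hb
    rw [← intervalIntegral.integral_add_adjacent_intervals (h_sub a b ha hab hb)
      (h_sub b 1 (ha.trans hab) hb le_rfl)]
    linarith [h_nonneg a b ha hab hb]
  -- integrability of the kernel times ω
  have hKint : ∀ (γ' t a b : ℝ), 0 ≤ a → a ≤ b → b ≤ t → t < 1 →
      IntervalIntegrable (fun s => ((1 - t) / (1 - s)) ^ γ' * ω s) volume a b := by
    intro γ' t a b ha hab hbt ht
    rw [intervalIntegrable_iff_integrableOn_Ioc_of_le hab]
    apply MeasureTheory.IntegrableOn.mono_set _ Set.Ioc_subset_Icc_self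
    apply MeasureTheory.IntegrableOn.continuousOn_mul _ _ isCompact_Icc
    · apply ContinuousOn.rpow_const
      · apply ContinuousOn.div continuousOn_const
          (Continuous.continuousOn (by continuity))
        intro s hs
        have : s < 1 := lt_of_le_of_lt (hs.2.trans hbt) ht
        intro h; linarith [sub_eq_zero.mp h]
      · intro s hs
        left
        have hs1 : s < 1 := lt_of_le_of_lt (hs.2.trans hbt) ht
        apply div_ne_zero <;> intro h
        · linarith [sub_eq_zero.mp h]
        · linarith [sub_eq_zero.mp h]
    · exact hint.mono_set (fun s hs => ⟨le_trans ha hs.1, lt_of_le_of_lt (hs.2.trans hbt) ht⟩)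
  -- main induction
  have key : ∀ n : ℕ, ∀ γ : ℝ, γ₀ ≤ γ → ∀ t : ℝ, 0 ≤ t → t ≤ 1 - (1/2:ℝ)^n →
      (∫ s in (0:ℝ)..t, ((1 - t) / (1 - s)) ^ γ * ω s) ≤ (2*C) * ∫ s in t..1, ω s := by
    intro n
    induction n with
    | zero =>
      intro γ hγ t ht0 ht1
      have : t = 0 := le_antisymm (by simpa using ht1) ht0
      subst this
      rw [intervalIntegral.integral_same]
      have := h_nonneg 0 1 le_rfl (by norm_num) le_rfl
      positivity
    | succ n ih =>
      intro γ hγ t ht0 ht1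
      have hpw : (0:ℝ) < (1/2:ℝ)^(n+1) := by positivity
      have htlt : t < 1 := by linarith
      have hγ1 : 1 ≤ γ := le_trans hγ₀1 hγ
      have hγ0 : 0 ≤ γ := by linarith
      have hwt : 0 ≤ ∫ s in t..1, ω s := h_nonneg t 1 ht0 htlt.le le_rfl
      have hK_le_one : ∀ s, 0 ≤ s → s ≤ t → ((1 - t) / (1 - s)) ^ γ ≤ 1 := by
        intro s hs0 hst
        apply Real.rpow_le_one (div_nonneg (by linarith) (by linarith))
          (div_le_one_of_le₀ (by linarith) (by linarith)) hγ0
      have hK_nonneg : ∀ s, s ≤ t → 0 ≤ ((1 - t) / (1 - s)) ^ γ := by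
        intro s hst
        exact Real.rpow_nonneg (div_nonneg (by linarith) (by linarith)) γ
      by_cases hhalf : t ≤ 1/2
      · -- easy case
        have hb1 : (∫ s in (0:ℝ)..t, ((1 - t) / (1 - s)) ^ γ * ω s) ≤ ∫ s in (0:ℝ)..t, ω s := by
          apply intervalIntegral.integral_mono_on ht0 (hKint γ t 0 t le_rfl ht0 le_rfl htlt)
            (h_sub 0 t le_rfl ht0 htlt.le)
          intro s hs
          have hω0 : 0 ≤ ω s := hpos s ⟨hs.1, lt_of_le_of_lt hs.2 htlt⟩
          exact mul_le_of_le_one_left hω0 (hK_le_one s hs.1 hs.2)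
        have e : (∫ s in (0:ℝ)..t, ω s) + ∫ s in t..1, ω s = ∫ s in (0:ℝ)..1, ω s :=
          intervalIntegral.integral_add_adjacent_intervals
            (h_sub 0 t le_rfl ht0 htlt.le) (h_sub t 1 ht0 htlt.le le_rfl)
        have d := hdbl 0 le_rfl (by norm_num)
        norm_num at d
        have m : (∫ s in (1/2:ℝ)..1, ω s) ≤ ∫ s in t..1, ω s :=
          h_w_mono t (1/2) ht0 hhalf (by norm_num)
        nlinarith
      · -- recursive case
        push_neg at hhalf
        set t' : ℝ := 2*t - 1 with ht'def
        have ht'0 : 0 ≤ t' := by rw [ht'def]; linarith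
        have ht't : t' ≤ t := by rw [ht'def]; linarith
        have ht'lt : t' < 1 := by rw [ht'def]; linarith
        have ht'le : t' ≤ 1 - (1/2:ℝ)^n := by
          have : (1/2:ℝ)^(n+1) = (1/2)*(1/2)^n := by ring
          rw [ht'def]; nlinarith
        have hw' : (∫ s in t'..1, ω s) ≤ C * ∫ s in t..1, ω s := by
          have b3 := hdbl t' ht'0 ht'lt
          have e : (1 + t')/2 = t := by rw [ht'def]; ring
          rwa [e] at b3
        have split : (∫ s in (0:ℝ)..t, ((1 - t) / (1 - s)) ^ γ * ω s)
            = (∫ s in (0:ℝ)..t', ((1 - t) / (1 - s)) ^ γ * ω s)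
              + ∫ s in t'..t, ((1 - t) / (1 - s)) ^ γ * ω s :=
          (intervalIntegral.integral_add_adjacent_intervals
            (hKint γ t 0 t' le_rfl ht'0 ht't htlt) (hKint γ t t' t ht'0 ht't le_rfl htlt)).symm
        have hB : (∫ s in t'..t, ((1 - t) / (1 - s)) ^ γ * ω s) ≤ C * ∫ s in t..1, ω s := by
          have b1 : (∫ s in t'..t, ((1 - t) / (1 - s)) ^ γ * ω s) ≤ ∫ s in t'..t, ω s := by
            apply intervalIntegral.integral_mono_on ht't
              (hKint γ t t' t ht'0 ht't le_rfl htlt) (h_sub t' t ht'0 ht't htlt.le)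
            intro s hs
            have hω0 : 0 ≤ ω s := hpos s ⟨ht'0.trans hs.1, lt_of_le_of_lt hs.2 htlt⟩
            exact mul_le_of_le_one_left hω0 (hK_le_one s (ht'0.trans hs.1) hs.2)
          have b2 : (∫ s in t'..t, ω s) ≤ ∫ s in t'..1, ω s := by
            rw [← intervalIntegral.integral_add_adjacent_intervals
              (h_sub t' t ht'0 ht't htlt.le) (h_sub t 1 ht0 htlt.le le_rfl)]
            linarith [h_nonneg t 1 ht0 htlt.le le_rfl]
          linarith
        have hCeq : (∫ s in (0:ℝ)..t', ((1 - t) / (1 - s)) ^ γ * ω s)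
            = (1/2:ℝ)^γ * ∫ s in (0:ℝ)..t', ((1 - t') / (1 - s)) ^ γ * ω s := by
          rw [← intervalIntegral.integral_const_mul]
          apply intervalIntegral.integral_congr
          intro s hs
          simp only
          rw [Set.uIcc_of_le ht'0] at hs
          have h1s : (0:ℝ) < 1 - s := by linarith [hs.2]
          have hb : (1 - t)/(1 - s) = (1/2) * ((1 - t')/(1 - s)) := by
            rw [ht'def]; field_simp; ring
          rw [hb, Real.mul_rpow (by norm_num) (div_nonneg (by linarith) h1s.le), mul_assoc]
        have hX0 : 0 ≤ ∫ s in (0:ℝ)..t', ((1 - t') / (1 - s)) ^ γ * ω s := by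
          apply intervalIntegral.integral_nonneg ht'0
          intro s hs
          have hω0 : 0 ≤ ω s := hpos s ⟨hs.1, lt_of_le_of_lt hs.2 ht'lt⟩
          exact mul_nonneg (Real.rpow_nonneg (div_nonneg (by linarith [hs.2]) (by linarith [hs.2, ht'lt])) γ) hω0
        have hIH := ih γ hγ t' ht'0 ht'le
        have hXle : (∫ s in (0:ℝ)..t', ((1 - t') / (1 - s)) ^ γ * ω s)
            ≤ 2*C*(C * ∫ s in t..1, ω s) := by
          calc _ ≤ (2*C) * ∫ s in t'..1, ω s := hIH
          _ ≤ 2*C*(C * ∫ s in t..1, ω s) := by nlinarith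
        have hhγ : ((1:ℝ)/2)^γ ≤ (2*C)⁻¹ := by
          rw [← h_half]
          exact Real.rpow_le_rpow_of_exponent_ge (by norm_num) (by norm_num) hγ
        have hA : (∫ s in (0:ℝ)..t', ((1 - t) / (1 - s)) ^ γ * ω s)
            ≤ C * ∫ s in t..1, ω s := by
          rw [hCeq]
          calc ((1:ℝ)/2)^γ * ∫ s in (0:ℝ)..t', ((1 - t') / (1 - s)) ^ γ * ω s
              ≤ (2*C)⁻¹ * (2*C*(C * ∫ s in t..1, ω s)) := by
                apply mul_le_mul hhγ hXle hX0 (by positivity)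
          _ = C * ∫ s in t..1, ω s := by field_simp
        rw [split]; linarith
  refine ⟨2*C, by linarith, γ₀, by linarith, ?_⟩
  intro γ hγ t ht0 ht1
  obtain ⟨n, hn⟩ := exists_pow_lt_of_lt_one (by linarith : (0:ℝ) < 1 - t) (by norm_num : (1/2:ℝ) < 1)
  exact key n γ hγ t ht0 (by linarith)
end

section
/- Let f be analytic on 𝔻 and q ≥ 2. Then for fixed 0 < r < 1 and all z ∈ 𝔻, |f'(z)|^q (1-|z|²)^q ≲ ∫_{Δ(z,r)} Δ|f|^q(ζ) dA(ζ), where Δ|f|^q denotes the distributional Laplacian of |f|^q (which is q²|f|^{q-2}|f'|² and is subharmonic for q ≥ 2). -/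
open MeasureTheory Set Metric Complex
open scoped ENNReal NNReal

noncomputable section

/-- Pseudohyperbolic disc Δ(z,r). -/
def phDisc (z : ℂ) (r : ℝ) : Set ℂ :=
  {ζ | ‖ζ‖ < 1 ∧ ‖(z - ζ) / (1 - (starRingEnd ℂ) z * ζ)‖ < r}

lemma det_mul_complex (c : ℂ) :
    (((1 : ℂ →L[ℂ] ℂ).smulRight c).restrictScalars ℝ).det = Complex.normSq c := by
  have hL : ∀ z : ℂ, (((1 : ℂ →L[ℂ] ℂ).smulRight c).restrictScalars ℝ) z = z * c := by
    intro z; simp [ContinuousLinearMap.smulRight_apply, smul_eq_mul]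
  rw [ContinuousLinearMap.det]
  have : (((1 : ℂ →L[ℂ] ℂ).smulRight c).restrictScalars ℝ : ℂ →ₗ[ℝ] ℂ).det
      = Matrix.det (LinearMap.toMatrix Complex.basisOneI Complex.basisOneI
        (((1 : ℂ →L[ℂ] ℂ).smulRight c).restrictScalars ℝ : ℂ →ₗ[ℝ] ℂ)) :=
    (LinearMap.det_toMatrix _ _).symm
  rw [this, Matrix.det_fin_two]
  simp [LinearMap.toMatrix_apply, Complex.coe_basisOneI, hL, Complex.coe_basisOneI_repr,
    Complex.normSq_apply]

lemma key_inverse {g : ℂ → ℂ} {p : ℂ} {s : ℝ} (hs : 0 < s) {b : ℂ} (hb : b ≠ 0)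
    (h : ∀ w₁ ∈ closedBall p s, ∀ w₂ ∈ closedBall p s,
      ‖g w₁ - g w₂ - b * (w₁ - w₂)‖ ≤ ‖b‖ / 2 * ‖w₁ - w₂‖) :
    InjOn g (closedBall p s) ∧ ball (g p) (s * ‖b‖ / 4) ⊆ g '' closedBall p s := by
  have hbpos : (0:ℝ) < ‖b‖ := norm_pos_iff.2 hb
  constructor
  · intro w₁ h₁ w₂ h₂ he
    by_contra hne
    have h12 : (0:ℝ) < ‖w₁ - w₂‖ := by
      rw [norm_pos_iff]; exact sub_ne_zero.2 hne
    have hkey : ‖b‖ * ‖w₁ - w₂‖ ≤ ‖b‖ / 2 * ‖w₁ - w₂‖ := by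
      calc ‖b‖ * ‖w₁ - w₂‖ = ‖b * (w₁ - w₂)‖ := (norm_mul _ _).symm
        _ = ‖g w₁ - g w₂ - b * (w₁ - w₂)‖ := by rw [he, sub_self, zero_sub, norm_neg]
        _ ≤ ‖b‖ / 2 * ‖w₁ - w₂‖ := h w₁ h₁ w₂ h₂
    nlinarith
  · intro v hv
    rw [mem_ball, dist_eq_norm] at hv
    set F : ℂ → ℂ := fun w => w - (g w - v) / b with hF
    have hlip : LipschitzOnWith (2⁻¹ : ℝ≥0) F (closedBall p s) := by
      rw [lipschitzOnWith_iff_norm_sub_le]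
      intro w₁ h₁ w₂ h₂
      have hdiff : F w₁ - F w₂ = -((g w₁ - g w₂ - b * (w₁ - w₂)) / b) := by
        simp only [hF]; field_simp; ring
      rw [hdiff, norm_neg, norm_div]
      rw [div_le_iff₀ hbpos]
      calc ‖g w₁ - g w₂ - b * (w₁ - w₂)‖ ≤ ‖b‖ / 2 * ‖w₁ - w₂‖ := h w₁ h₁ w₂ h₂
        _ = ((2⁻¹ : ℝ≥0) : ℝ) * ‖w₁ - w₂‖ * ‖b‖ := by push_cast; ring
    have hmaps : MapsTo F (closedBall p s) (closedBall p s) := by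
      intro w hw
      rw [mem_closedBall, dist_eq_norm]
      have hgw : ‖g w - g p - b * (w - p)‖ ≤ ‖b‖ / 2 * ‖w - p‖ :=
        h w hw p (mem_closedBall_self hs.le)
      have hwp : ‖w - p‖ ≤ s := by rwa [mem_closedBall, dist_eq_norm] at hw
      have hFd : F w - p = -((g w - g p - b * (w - p)) / b) + (v - g p) / b := by
        simp only [hF]; field_simp; ring
      calc ‖F w - p‖ ≤ ‖(g w - g p - b * (w - p)) / b‖ + ‖(v - g p) / b‖ := by
            rw [hFd]; exact (norm_add_le _ _).trans (by rw [norm_neg])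
        _ ≤ (‖b‖ / 2 * s) / ‖b‖ + (s * ‖b‖ / 4) / ‖b‖ := by
            rw [norm_div, norm_div]
            have e1 : ‖g w - g p - b * (w - p)‖ ≤ ‖b‖ / 2 * s := by
              refine hgw.trans ?_
              have : (0:ℝ) ≤ ‖b‖ / 2 := by positivity
              exact mul_le_mul_of_nonneg_left hwp this
            have e2 : ‖v - g p‖ ≤ s * ‖b‖ / 4 := hv.le
            gcongr
        _ ≤ s := by rw [← add_div, div_le_iff₀ hbpos]; nlinarith
    have hcw : ContractingWith (2⁻¹ : ℝ≥0) (hmaps.restrict F _ _) := by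
      constructor
      · rw [← NNReal.coe_lt_coe]; norm_num
      · exact hmaps.lipschitzOnWith_iff_restrict.1 hlip
    obtain ⟨y, hy, hfix, -⟩ := hcw.exists_fixedPoint'
      (isClosed_closedBall.isComplete) hmaps (mem_closedBall_self hs.le) (edist_ne_top _ _)
    refine ⟨y, hy, ?_⟩
    have h1 : y - (g y - v) / b = y := hfix
    have h2 : (g y - v) / b = 0 := by linear_combination -h1
    have h3 := (div_eq_zero_iff.1 h2).resolve_right hb
    exact sub_eq_zero.1 h3

lemma bloch {f : ℂ → ℂ} (hf : DifferentiableOn ℂ f (ball (0:ℂ) 1)) {z : ℂ} {R : ℝ}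
    (hR : 0 < R) (hsub : closedBall z R ⊆ ball (0:ℂ) 1) (hA : deriv f z ≠ 0) :
    ∃ p s, 0 < s ∧ closedBall p s ⊆ ball z R ∧ InjOn f (closedBall p s) ∧
      ball (f p) (R * ‖deriv f z‖ / 64) ⊆ f '' closedBall p s := by
  have hfa : AnalyticOnNhd ℂ f (ball (0:ℂ) 1) := hf.analyticOnNhd isOpen_ball
  have hfd : AnalyticOnNhd ℂ (deriv f) (ball (0:ℂ) 1) := hfa.deriv
  have hderivcont : ContinuousOn (deriv f) (ball (0:ℂ) 1) := hfd.continuousOn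
  set A := ‖deriv f z‖ with hAdef
  have hApos : 0 < A := norm_pos_iff.2 hA
  set M : ℂ → ℝ := fun w => (R - dist w z) * ‖deriv f w‖ with hM
  have hMcont : ContinuousOn M (closedBall z R) := by
    apply ContinuousOn.mul
    · exact (continuous_const.sub (continuous_id.dist continuous_const)).continuousOn
    · exact ((hderivcont.mono hsub).norm)
  obtain ⟨p, hpmem, hmax⟩ := (isCompact_closedBall z R).exists_isMaxOn
    ⟨z, mem_closedBall_self hR.le⟩ hMcont
  have hMz : M z = R * A := by
    show (R - dist z z) * ‖deriv f z‖ = R * A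
    rw [dist_self, hAdef]; ring
  have hMp : R * A ≤ M p := by
    have := hmax (mem_closedBall_self hR.le)
    simp only [Set.mem_setOf_eq] at this
    rw [hMz] at this; exact this
  have hMppos : 0 < M p := lt_of_lt_of_le (by positivity) hMp
  have hpz : dist p z < R := by
    by_contra hc
    push_neg at hc
    have : M p ≤ 0 := mul_nonpos_of_nonpos_of_nonneg (by linarith) (norm_nonneg _)
    linarith
  have hfppos : 0 < ‖deriv f p‖ := by
    rcases (norm_nonneg (deriv f p)).lt_or_eq with h | h
    · exact h
    · exfalso; rw [hM] at hMppos; simp only at hMppos; nlinarith [hMppos]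
  set ρ : ℝ := (R - dist p z) / 2 with hρdef
  have hρ : 0 < ρ := by simp [hρdef]; linarith
  have hballρ : ball p ρ ⊆ closedBall z R := by
    intro w hw
    rw [mem_ball] at hw
    rw [mem_closedBall]
    calc dist w z ≤ dist w p + dist p z := dist_triangle _ _ _
      _ ≤ ρ + dist p z := by linarith
      _ ≤ R := by rw [hρdef]; linarith
  have hbound : ∀ w ∈ ball p ρ, ‖deriv f w‖ ≤ 2 * ‖deriv f p‖ := by
    intro w hw
    have hMw : M w ≤ M p := hmax (hballρ hw)
    have hwz : dist w z ≤ dist w p + dist p z := dist_triangle _ _ _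
    rw [mem_ball] at hw
    have h1 : ρ ≤ R - dist w z := by rw [hρdef] at *; linarith
    have h2 : (R - dist w z) * ‖deriv f w‖ ≤ 2 * ρ * ‖deriv f p‖ := by
      rw [hM] at hMw; simp only at hMw
      calc (R - dist w z) * ‖deriv f w‖ ≤ (R - dist p z) * ‖deriv f p‖ := hMw
        _ = 2 * ρ * ‖deriv f p‖ := by rw [hρdef]; ring
    nlinarith [norm_nonneg (deriv f w)]
  -- Schwarz lemma applied to deriv f on ball p ρ
  have hballρ' : ball p ρ ⊆ ball (0:ℂ) 1 := fun w hw => hsub (hballρ hw)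
  have hdiffd : DifferentiableOn ℂ (deriv f) (ball p ρ) :=
    (hfd.differentiableOn).mono hballρ'
  have hmapsd : MapsTo (deriv f) (ball p ρ) (ball (deriv f p) (4 * ‖deriv f p‖)) := by
    intro w hw
    rw [mem_ball, dist_eq_norm]
    calc ‖deriv f w - deriv f p‖ ≤ ‖deriv f w‖ + ‖deriv f p‖ := norm_sub_le _ _
      _ ≤ 2 * ‖deriv f p‖ + ‖deriv f p‖ := by linarith [hbound w hw]
      _ < 4 * ‖deriv f p‖ := by linarith
  have hschwarz : ∀ w ∈ ball p ρ,
      dist (deriv f w) (deriv f p) ≤ 4 * ‖deriv f p‖ / ρ * dist w p :=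
    fun w hw => Complex.dist_le_div_mul_dist_of_mapsTo_ball hdiffd (hmapsd.mono_right ball_subset_closedBall) hw
  set s : ℝ := ρ / 8 with hsdef
  have hs : 0 < s := by positivity
  have hsball : closedBall p s ⊆ ball p ρ := by
    apply closedBall_subset_ball; rw [hsdef]; linarith
  set b : ℂ := deriv f p with hbdef
  have hb : b ≠ 0 := norm_pos_iff.1 hfppos
  have hd2 : ∀ w ∈ closedBall p s, ‖deriv f w - b‖ ≤ ‖b‖ / 2 := by
    intro w hw
    have h1 := hschwarz w (hsball hw)
    rw [dist_eq_norm] at h1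
    have h2 : dist w p ≤ s := mem_closedBall.1 hw
    calc ‖deriv f w - b‖ ≤ 4 * ‖b‖ / ρ * dist w p := h1
      _ ≤ 4 * ‖b‖ / ρ * s := by
          apply mul_le_mul_of_nonneg_left h2; positivity
      _ = ‖b‖ / 2 := by rw [hsdef]; field_simp; ring
  -- mean value inequality
  have hkey : ∀ w₁ ∈ closedBall p s, ∀ w₂ ∈ closedBall p s,
      ‖f w₁ - f w₂ - b * (w₁ - w₂)‖ ≤ ‖b‖ / 2 * ‖w₁ - w₂‖ := by
    intro w₁ h₁ w₂ h₂
    set φ : ℂ → ℂ := fun w => f w - b * w with hφ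
    set φ' : ℂ → (ℂ →L[ℝ] ℂ) := fun w =>
      ((1 : ℂ →L[ℂ] ℂ).smulRight (deriv f w - b)).restrictScalars ℝ with hφ'
    have hder : ∀ w ∈ closedBall p s, HasFDerivWithinAt φ (φ' w) (closedBall p s) w := by
      intro w hw
      have hw1 : w ∈ ball (0:ℂ) 1 := hsub (hballρ (hsball hw))
      have hdw : HasDerivAt f (deriv f w) w :=
        (hf.differentiableAt (isOpen_ball.mem_nhds hw1)).hasDerivAt
      have hdφ : HasDerivAt φ (deriv f w - b) w := by
        have h := hdw.sub ((hasDerivAt_id w).const_mul b); rw [mul_one] at h; exact h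
      exact ((hdφ.hasFDerivAt).restrictScalars ℝ).hasFDerivWithinAt
    have hnb : ∀ w ∈ closedBall p s, ‖φ' w‖ ≤ ‖b‖ / 2 := by
      intro w hw
      rw [hφ']
      simp only [ContinuousLinearMap.norm_restrictScalars]
      rw [ContinuousLinearMap.norm_smulRight_apply]
      have h1 : ‖(1 : ℂ →L[ℂ] ℂ)‖ = 1 := norm_one
      rw [h1, one_mul]
      exact hd2 w hw
    have := (convex_closedBall p s).norm_image_sub_le_of_norm_hasFDerivWithin_le
      hder hnb h₂ h₁
    calc ‖f w₁ - f w₂ - b * (w₁ - w₂)‖ = ‖φ w₁ - φ w₂‖ := by rw [hφ]; ring_nf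
      _ ≤ ‖b‖ / 2 * ‖w₁ - w₂‖ := this
  obtain ⟨hinj, himg⟩ := key_inverse hs hb hkey
  refine ⟨p, s, hs, ?_, hinj, ?_⟩
  · intro w hw
    rw [mem_closedBall] at hw
    rw [mem_ball]
    calc dist w z ≤ dist w p + dist p z := dist_triangle _ _ _
      _ ≤ s + dist p z := by linarith
      _ < R := by rw [hsdef, hρdef] at *; linarith
  · refine Subset.trans (ball_subset_ball ?_) himg
    have : s * ‖b‖ / 4 = M p / 64 := by
      rw [hsdef, hρdef, hM, hbdef]; ring
    rw [this]
    linarith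

lemma ball_subset_phDisc {z : ℂ} (hz : ‖z‖ < 1) {r : ℝ} (hr0 : 0 < r) (hr1 : r < 1) :
    ball z (r / 2 * (1 - ‖z‖)) ⊆ phDisc z r := by
  set R := r / 2 * (1 - ‖z‖) with hRdef
  have h1z : 0 < 1 - ‖z‖ := by linarith
  have hR : 0 < R := by positivity
  intro ζ hζ
  rw [mem_ball, dist_eq_norm] at hζ
  have hζn : ‖ζ - z‖ < R := hζ
  have habsz : 0 ≤ ‖z‖ := norm_nonneg z
  have hζa : ‖ζ‖ ≤ ‖z‖ + ‖ζ - z‖ := by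
    simpa using norm_add_le z (ζ - z)
  have hζ1 : ‖ζ‖ < 1 := by
    have : R < 1 - ‖z‖ := by rw [hRdef]; nlinarith
    linarith
  refine ⟨hζ1, ?_⟩
  rw [norm_div]
  have hden : (1 - ‖z‖) * (1 - r / 2) ≤ ‖1 - (starRingEnd ℂ) z * ζ‖ := by
    have h1 : ‖(starRingEnd ℂ) z * ζ‖ = ‖z‖ * ‖ζ‖ := by
      rw [norm_mul]; simp
    have h2 : 1 - ‖z‖ * ‖ζ‖ ≤ ‖1 - (starRingEnd ℂ) z * ζ‖ := by
      have h := norm_sub_norm_le (1:ℂ) ((starRingEnd ℂ) z * ζ)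
      rw [norm_one] at h
      rw [← h1]
      simpa using h
    have h3 : ‖z‖ * ‖ζ‖ ≤ ‖z‖ * (‖z‖ + R) := by
      nlinarith
    nlinarith [norm_nonneg ζ]
  have hdenpos : 0 < (1 - ‖z‖) * (1 - r / 2) := by nlinarith
  rw [div_lt_iff₀ (lt_of_lt_of_le hdenpos hden)]
  have hnum : ‖z - ζ‖ < R := by rwa [← norm_neg, neg_sub]
  calc ‖z - ζ‖ < R := hnum
    _ ≤ r * ((1 - ‖z‖) * (1 - r / 2)) := by rw [hRdef]; nlinarith
    _ ≤ r * ‖1 - (starRingEnd ℂ) z * ζ‖ := by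
        apply mul_le_mul_of_nonneg_left hden hr0.le

lemma lower_bound_integral_ball (q : ℝ) (hq : 2 ≤ q) {w₀ : ℂ} {t : ℝ} (ht : 0 < t) :
    ENNReal.ofReal (q ^ 2 * (t / 4) ^ q) * volume (ball (0:ℂ) 1) ≤
      ∫⁻ ζ in ball w₀ t, ENNReal.ofReal (q ^ 2 * ‖ζ‖ ^ (q - 2)) := by
  -- choose a point ζ₁ with ‖ζ₁ - w₀‖ ≤ t/2 and ‖ζ₁‖ ≥ t/2
  have hnorm : ‖((t/2:ℝ) : ℂ)‖ = t/2 := by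
    rw [Complex.norm_real, Real.norm_eq_abs, _root_.abs_of_nonneg]; positivity
  obtain ⟨ζ₁, hd, hn⟩ : ∃ ζ₁ : ℂ, ‖ζ₁ - w₀‖ ≤ t / 2 ∧ t / 2 ≤ ‖ζ₁‖ := by
    by_cases hc : t / 2 ≤ ‖w₀ + ((t/2:ℝ) : ℂ)‖
    · refine ⟨w₀ + ((t/2:ℝ) : ℂ), ?_, hc⟩
      have : w₀ + ((t/2:ℝ) : ℂ) - w₀ = ((t/2:ℝ) : ℂ) := by ring
      rw [this, hnorm]
    · push_neg at hc
      refine ⟨w₀ - ((t/2:ℝ) : ℂ), ?_, ?_⟩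
      · have : w₀ - ((t/2:ℝ) : ℂ) - w₀ = -((t/2:ℝ) : ℂ) := by ring
        rw [this, norm_neg, hnorm]
      · have h2 : (w₀ + ((t/2:ℝ) : ℂ)) - (w₀ - ((t/2:ℝ) : ℂ)) = ((t:ℝ) : ℂ) := by
          push_cast; ring
        have h3 := norm_sub_le (w₀ + ((t/2:ℝ) : ℂ)) (w₀ - ((t/2:ℝ) : ℂ))
        rw [h2] at h3
        have h4 : ‖((t:ℝ) : ℂ)‖ = t := by
          rw [Complex.norm_real, Real.norm_eq_abs, _root_.abs_of_nonneg ht.le]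
        rw [h4] at h3
        linarith
  have hsub : ball ζ₁ (t/4) ⊆ ball w₀ t := by
    intro ζ hζ
    rw [mem_ball, dist_eq_norm] at *
    calc ‖ζ - w₀‖ ≤ ‖ζ - ζ₁‖ + ‖ζ₁ - w₀‖ := by
          simpa using norm_add_le (ζ - ζ₁) (ζ₁ - w₀)
      _ < t/4 + t/2 := by linarith [hζ]
      _ ≤ t := by linarith
  have hlow : ∀ ζ ∈ ball ζ₁ (t/4), (t/4 : ℝ) ≤ ‖ζ‖ := by
    intro ζ hζ
    rw [mem_ball, dist_eq_norm] at hζ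
    have := norm_sub_norm_le ζ₁ ζ
    rw [norm_sub_rev] at hζ
    linarith
  have hmeas : Measurable (fun ζ : ℂ => ENNReal.ofReal (q ^ 2 * ‖ζ‖ ^ (q - 2))) := by
    apply Measurable.ennreal_ofReal
    exact (measurable_const.mul (measurable_norm.pow_const _))
  calc ENNReal.ofReal (q ^ 2 * (t / 4) ^ q) * volume (ball (0:ℂ) 1)
      = ENNReal.ofReal (q ^ 2 * (t / 4) ^ (q-2)) * volume (ball ζ₁ (t/4)) := by
        have e1 : (t/4:ℝ) ^ (q-2) * (t/4:ℝ) ^ (2:ℕ) = (t/4:ℝ) ^ q := by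
          rw [← Real.rpow_natCast (t/4) 2, ← Real.rpow_add (by positivity : (0:ℝ) < t/4)]
          norm_num
        rw [Measure.addHaar_ball volume ζ₁ (by positivity : (0:ℝ) ≤ t/4),
          Complex.finrank_real_complex, ← mul_assoc,
          ← ENNReal.ofReal_mul (by positivity), mul_assoc (q^2), e1]
    _ ≤ ∫⁻ ζ in ball ζ₁ (t/4), ENNReal.ofReal (q ^ 2 * ‖ζ‖ ^ (q - 2)) := by
        rw [← setLIntegral_const]
        apply setLIntegral_mono hmeas
        intro ζ hζ
        apply ENNReal.ofReal_le_ofReal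
        have h1 : (t/4 : ℝ) ^ (q-2) ≤ ‖ζ‖ ^ (q-2) :=
          Real.rpow_le_rpow (by positivity) (hlow ζ hζ) (by linarith)
        nlinarith [Real.rpow_nonneg (show (0:ℝ) ≤ t/4 by positivity) (q-2), sq_nonneg q]
    _ ≤ ∫⁻ ζ in ball w₀ t, ENNReal.ofReal (q ^ 2 * ‖ζ‖ ^ (q - 2)) :=
        lintegral_mono_set hsub


/-- For f analytic and q ≥ 2,
|f'(z)|^q (1-|z|²)^q ≲ ∫_{Δ(z,r)} Δ|f|^q dA, where Δ|f|^q = q²|f|^{q-2}|f'|². -/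
theorem stmt9 (q : ℝ) (hq : 2 ≤ q) (r : ℝ) (hr0 : 0 < r) (hr1 : r < 1) :
    ∃ c : ℝ, 0 < c ∧ ∀ f : ℂ → ℂ, DifferentiableOn ℂ f (Metric.ball 0 1) →
      ∀ z ∈ Metric.ball (0:ℂ) 1,
        ENNReal.ofReal (‖deriv f z‖ ^ q * (1 - ‖z‖ ^ 2) ^ q) ≤
          ENNReal.ofReal c *
            ∫⁻ ζ in phDisc z r,
              ENNReal.ofReal (q ^ 2 * ‖f ζ‖ ^ (q - 2) * ‖deriv f ζ‖ ^ (2:ℝ)) := by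
  have hq0 : (0:ℝ) < q := by linarith
  set V : ℝ := (volume (ball (0:ℂ) 1)).toReal with hVdef
  have hVball : volume (ball (0:ℂ) 1) ≠ ⊤ := measure_ball_lt_top.ne
  have hVpos : 0 < V :=
    ENNReal.toReal_pos (measure_ball_pos volume 0 one_pos).ne' hVball
  have hcnum : (0:ℝ) < (1024 / r) ^ q := Real.rpow_pos_of_pos (by positivity) q
  refine ⟨(1024 / r) ^ q / (q ^ 2 * V), by positivity, ?_⟩
  intro f hf z hz
  set c : ℝ := (1024 / r) ^ q / (q ^ 2 * V) with hcdef
  have hc0 : 0 < c := by positivity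
  have haz : ‖z‖ < 1 := by
    rw [mem_ball, Complex.dist_eq, sub_zero] at hz; exact hz
  by_cases hA : deriv f z = 0
  · have : ‖deriv f z‖ ^ q = 0 := by
      rw [hA, norm_zero, Real.zero_rpow hq0.ne']
    rw [this, zero_mul, ENNReal.ofReal_zero]
    exact zero_le
  · set A : ℝ := ‖deriv f z‖ with hAdef
    have hApos : 0 < A := norm_pos_iff.2 hA
    have h1z : 0 < 1 - ‖z‖ := by linarith
    set R : ℝ := r / 2 * (1 - ‖z‖) with hRdef
    have hR : 0 < R := by positivity
    have hsubc : closedBall z R ⊆ ball (0:ℂ) 1 := by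
      intro w hw
      rw [mem_closedBall] at hw
      rw [mem_ball]
      have h1 : dist w 0 ≤ dist w z + dist z 0 := dist_triangle _ _ _
      have h2 : dist z 0 = ‖z‖ := by rw [Complex.dist_eq, sub_zero]
      have h3 : R < 1 - ‖z‖ := by rw [hRdef]; nlinarith
      rw [h2] at h1; linarith
    obtain ⟨p, s, hs, hball, hinj, himg⟩ := bloch hf hR hsubc hA
    set t : ℝ := R * A / 64 with htdef
    have ht : 0 < t := by positivity
    -- pointwise identity for the change of variables
    set F' : ℂ → (ℂ →L[ℝ] ℂ) := fun w =>
      ((1 : ℂ →L[ℂ] ℂ).smulRight (deriv f w)).restrictScalars ℝ with hF'def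
    have hF' : ∀ w ∈ closedBall p s, HasFDerivWithinAt f (F' w) (closedBall p s) w := by
      intro w hw
      have hw1 : w ∈ ball (0:ℂ) 1 := hsubc (ball_subset_closedBall (hball hw))
      have hdw : HasDerivAt f (deriv f w) w :=
        (hf.differentiableAt (isOpen_ball.mem_nhds hw1)).hasDerivAt
      exact ((hdw.hasFDerivAt).restrictScalars ℝ).hasFDerivWithinAt
    set g : ℂ → ℝ≥0∞ := fun ζ => ENNReal.ofReal (q ^ 2 * ‖ζ‖ ^ (q - 2)) with hgdef
    have hpointwise : ∀ w : ℂ,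
        ENNReal.ofReal |(F' w).det| * g (f w)
          = ENNReal.ofReal (q ^ 2 * ‖f w‖ ^ (q - 2) * ‖deriv f w‖ ^ (2:ℝ)) := by
      intro w
      have hdet : (F' w).det = Complex.normSq (deriv f w) := det_mul_complex _
      have habs : |(F' w).det| = ‖deriv f w‖ ^ (2:ℝ) := by
        rw [hdet, _root_.abs_of_nonneg (Complex.normSq_nonneg _)]
        rw [Complex.normSq_eq_norm_sq]
        rw [Real.rpow_two]
      rw [habs, hgdef]
      rw [← ENNReal.ofReal_mul (by positivity)]
      congr 1
      ring
    have hCOV : ∫⁻ ζ in f '' closedBall p s, g ζ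
        = ∫⁻ w in closedBall p s, ENNReal.ofReal |(F' w).det| * g (f w) :=
      lintegral_image_eq_lintegral_abs_det_fderiv_mul volume
        (measurableSet_closedBall) hF' hinj g
    have hsubph : closedBall p s ⊆ phDisc z r :=
      fun w hw => ball_subset_phDisc haz hr0 hr1 (hball hw)
    have hchain : ENNReal.ofReal (q ^ 2 * (t/4) ^ q) * volume (ball (0:ℂ) 1)
        ≤ ∫⁻ ζ in phDisc z r,
            ENNReal.ofReal (q ^ 2 * ‖f ζ‖ ^ (q - 2) * ‖deriv f ζ‖ ^ (2:ℝ)) := by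
      calc ENNReal.ofReal (q ^ 2 * (t/4) ^ q) * volume (ball (0:ℂ) 1)
          ≤ ∫⁻ ζ in ball (f p) t, g ζ := lower_bound_integral_ball q hq ht
        _ ≤ ∫⁻ ζ in f '' closedBall p s, g ζ := by
            apply lintegral_mono_set
            have : R * ‖deriv f z‖ / 64 = t := by rw [htdef, hAdef]
            rw [← this]; exact himg
        _ = ∫⁻ w in closedBall p s, ENNReal.ofReal |(F' w).det| * g (f w) := hCOV
        _ = ∫⁻ w in closedBall p s,
              ENNReal.ofReal (q ^ 2 * ‖f w‖ ^ (q - 2) * ‖deriv f w‖ ^ (2:ℝ)) := by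
            apply lintegral_congr
            intro w; exact hpointwise w
        _ ≤ ∫⁻ ζ in phDisc z r,
              ENNReal.ofReal (q ^ 2 * ‖f ζ‖ ^ (q - 2) * ‖deriv f ζ‖ ^ (2:ℝ)) :=
            lintegral_mono_set hsubph
    -- final real arithmetic
    have hreal : A ^ q * (1 - ‖z‖ ^ 2) ^ q
        ≤ c * (q ^ 2 * (t/4) ^ q * V) := by
      have ht4 : t / 4 = r / 2 * (1 - ‖z‖) * A / 256 := by
        rw [htdef, hRdef]; ring
      have hc1 : c * (q ^ 2 * (t/4) ^ q * V) = (1024 / r) ^ q * (t/4) ^ q := by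
        rw [hcdef]; field_simp
      have h0 : (0:ℝ) ≤ 1 - ‖z‖ ^ 2 := by nlinarith [norm_nonneg z]
      have hbase : A * (1 - ‖z‖ ^ 2) ≤ 1024 / r * (t/4) := by
        rw [ht4]
        have h2 : 1 - ‖z‖ ^ 2 ≤ 2 * (1 - ‖z‖) := by
          nlinarith [norm_nonneg z]
        have h3 : 1024 / r * (r / 2 * (1 - ‖z‖) * A / 256)
            = 2 * (1 - ‖z‖) * A := by field_simp; ring
        rw [h3]
        nlinarith
      have hLnn : 0 ≤ A * (1 - ‖z‖ ^ 2) := mul_nonneg hApos.le h0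
      calc A ^ q * (1 - ‖z‖ ^ 2) ^ q
          = (A * (1 - ‖z‖ ^ 2)) ^ q := by
            rw [← Real.mul_rpow hApos.le h0]
        _ ≤ (1024 / r * (t/4)) ^ q := Real.rpow_le_rpow hLnn hbase hq0.le
        _ = (1024 / r) ^ q * (t/4) ^ q := Real.mul_rpow (by positivity) (by positivity)
        _ = c * (q ^ 2 * (t/4) ^ q * V) := hc1.symm
    calc ENNReal.ofReal (A ^ q * (1 - ‖z‖ ^ 2) ^ q)
        ≤ ENNReal.ofReal (c * (q ^ 2 * (t/4) ^ q * V)) := ENNReal.ofReal_le_ofReal hreal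
      _ = ENNReal.ofReal c * (ENNReal.ofReal (q ^ 2 * (t/4) ^ q) * volume (ball (0:ℂ) 1)) := by
          rw [← ENNReal.ofReal_toReal hVball, ← hVdef, ← ENNReal.ofReal_mul (by positivity),
            ← ENNReal.ofReal_mul hc0.le, mul_assoc]
      _ ≤ ENNReal.ofReal c * ∫⁻ ζ in phDisc z r,
            ENNReal.ofReal (q ^ 2 * ‖f ζ‖ ^ (q - 2) * ‖deriv f ζ‖ ^ (2:ℝ)) :=
          mul_le_mul_right hchain _
end
end

section
/- Let 0 < q < ∞, and let (φ_k)_{k∈ℕ} be nonnegative functions on a set X such that for each ζ ∈ X only finitely many φ_k(ζ) are nonzero. Define recursively k₁(ζ) = min{k : φ_k(ζ) > 0} and k_{j+1}(ζ) = min{k : φ_k(ζ) > 2φ_{k_j(ζ)}(ζ)}, and let φ̃_k(ζ) = φ_k(ζ) if k ∈ {k_j(ζ)} and 0 otherwise. Then (i) max_k φ̃_k(ζ) ≤ (Σ_k φ̃_k(ζ)^q)^{1/q} ≤ C(q)·max_k φ̃_k(ζ), and (ii) max_k φ̃_k(ζ) ≤ max_k φ_k(ζ) ≤ 2·max_k φ̃_k(ζ),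 for every ζ ∈ X. -/
open scoped Classical

noncomputable section

/-- Running maximum of the selected (stopping) values: `runMax φ k` is the value of the
last selected index before `k` (0 if none). An index `k` is selected iff
`φ k > 2 * runMax φ k`; this realizes Luecking's stopping sequence k₁ < k₂ < …,
where k₁ = min{k : φ_k > 0} and k_{j+1} = min{k : φ_k > 2 φ_{k_j}}. -/
def runMax (φ : ℕ → ℝ) : ℕ → ℝ
  | 0 => 0
  | k + 1 => if 2 * runMax φ k < φ k then φ k else runMax φ k

/-- The stopped sequence φ̃: equal to φ_k at selected indices, 0 otherwise. -/
def stopped (φ : ℕ → ℝ) (k : ℕ) : ℝ :=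
  if 2 * runMax φ k < φ k then φ k else 0

lemma runMax_nonneg (φ : ℕ → ℝ) (hφ : ∀ k, 0 ≤ φ k) : ∀ k, 0 ≤ runMax φ k := by
  intro k
  induction k with
  | zero => simp [runMax]
  | succ n ih =>
    rw [runMax]
    split
    · exact hφ n
    · exact ih

lemma stopped_nonneg (φ : ℕ → ℝ) (hφ : ∀ k, 0 ≤ φ k) (k : ℕ) : 0 ≤ stopped φ k := by
  unfold stopped
  split
  · exact hφ k
  · exact le_refl 0

lemma stopped_le (φ : ℕ → ℝ) (hφ : ∀ k, 0 ≤ φ k) (k : ℕ) : stopped φ k ≤ φ k := by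
  unfold stopped
  split
  · exact le_refl _
  · exact hφ k

lemma runMax_le_sup (φ : ℕ → ℝ) (hφ : ∀ k, 0 ≤ φ k)
    (hb : BddAbove (Set.range (stopped φ))) : ∀ k, runMax φ k ≤ ⨆ j, stopped φ j := by
  intro k
  induction k with
  | zero =>
    rw [runMax]
    exact le_trans (stopped_nonneg φ hφ 0) (le_ciSup hb 0)
  | succ n ih =>
    rw [runMax]
    split
    · rename_i h
      have hs : stopped φ n = φ n := if_pos h
      rw [← hs]
      exact le_ciSup hb n
    · exact ih

lemma sum_bound (φ : ℕ → ℝ) (hφ : ∀ k, 0 ≤ φ k) {q : ℝ} (hq : 0 < q) :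
    ∀ n, ∑ k ∈ Finset.range n, stopped φ k ^ q ≤ runMax φ n ^ q / (1 - (2:ℝ) ^ (-q)) := by
  have hc : (2:ℝ) ^ (-q) < 1 :=
    Real.rpow_lt_one_of_one_lt_of_neg one_lt_two (by linarith)
  have hc' : 0 < 1 - (2:ℝ) ^ (-q) := by linarith
  intro n
  induction n with
  | zero => simp [runMax, Real.zero_rpow hq.ne']
  | succ n ih =>
    rw [Finset.sum_range_succ, runMax]
    by_cases h : 2 * runMax φ n < φ n
    · rw [if_pos h, stopped, if_pos h]
      have h0 : 0 ≤ runMax φ n := runMax_nonneg φ hφ n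
      have h1 : runMax φ n ^ q ≤ (φ n / 2) ^ q :=
        Real.rpow_le_rpow h0 (by linarith) hq.le
      have h2 : (φ n / 2) ^ q = φ n ^ q * (2:ℝ) ^ (-q) := by
        rw [Real.div_rpow (hφ n) (by norm_num : (0:ℝ) ≤ 2),
          Real.rpow_neg (by norm_num : (0:ℝ) ≤ 2), div_eq_mul_inv]
      have h3 : ∑ k ∈ Finset.range n, stopped φ k ^ q ≤
          φ n ^ q * (2:ℝ) ^ (-q) / (1 - (2:ℝ) ^ (-q)) := by
        refine le_trans ih ?_
        rw [← h2]
        gcongr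
      have h4 : φ n ^ q * (2:ℝ) ^ (-q) / (1 - (2:ℝ) ^ (-q)) + φ n ^ q =
          φ n ^ q / (1 - (2:ℝ) ^ (-q)) := by
        field_simp
        ring
      linarith
    · rw [if_neg h, stopped, if_neg h, Real.zero_rpow hq.ne', add_zero]
      exact ih

/-- Luecking's stopping-sequence lemma: with φ̃ the stopped sequence,
(i) max_k φ̃_k ≤ (Σ_k φ̃_k^q)^{1/q} ≤ (1-2^{-q})^{-1/q}·max_k φ̃_k and
(ii) max_k φ̃_k ≤ max_k φ_k ≤ 2·max_k φ̃_k. -/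
theorem stmt13 {X : Type*} (φ : ℕ → X → ℝ) (hnn : ∀ k ζ, 0 ≤ φ k ζ)
    (hfin : ∀ ζ, {k : ℕ | φ k ζ ≠ 0}.Finite) (q : ℝ) (hq : 0 < q) :
    ∀ ζ : X,
      ((⨆ k, stopped (fun j => φ j ζ) k) ≤
          (∑' k, stopped (fun j => φ j ζ) k ^ q) ^ (1 / q) ∧
        (∑' k, stopped (fun j => φ j ζ) k ^ q) ^ (1 / q) ≤
          (1 - (2:ℝ) ^ (-q)) ^ (-(1 / q)) * ⨆ k, stopped (fun j => φ j ζ) k) ∧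
      ((⨆ k, stopped (fun j => φ j ζ) k) ≤ (⨆ k, φ k ζ) ∧
        (⨆ k, φ k ζ) ≤ 2 * ⨆ k, stopped (fun j => φ j ζ) k) := by
  intro ζ
  set ψ : ℕ → ℝ := fun j => φ j ζ with hψdef
  have hψ : ∀ k, 0 ≤ ψ k := fun k => hnn k ζ
  have hc : (2:ℝ) ^ (-q) < 1 :=
    Real.rpow_lt_one_of_one_lt_of_neg one_lt_two (by linarith)
  have hc' : 0 < 1 - (2:ℝ) ^ (-q) := by linarith
  have hfinψ : {k | ψ k ≠ 0}.Finite := hfin ζ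
  have hstop0 : ∀ k, ψ k = 0 → stopped ψ k = 0 := by
    intro k hk
    unfold stopped
    split <;> simp [hk]
  have hbstop : BddAbove (Set.range (stopped ψ)) := by
    apply Set.Finite.bddAbove
    apply Set.Finite.subset ((hfinψ.image (stopped ψ)).insert 0)
    rintro x ⟨k, rfl⟩
    by_cases h : ψ k = 0
    · simp [hstop0 k h]
    · exact Set.mem_insert_of_mem _ ⟨k, h, rfl⟩
  have hbφ : BddAbove (Set.range ψ) := by
    apply Set.Finite.bddAbove
    apply Set.Finite.subset ((hfinψ.image ψ).insert 0)
    rintro x ⟨k, rfl⟩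
    by_cases h : ψ k = 0
    · simp [h]
    · exact Set.mem_insert_of_mem _ ⟨k, h, rfl⟩
  set S := ⨆ k, stopped ψ k with hSdef
  have hS0 : 0 ≤ S := le_trans (stopped_nonneg ψ hψ 0) (le_ciSup hbstop 0)
  have hsum : Summable (fun k => stopped ψ k ^ q) := by
    apply summable_of_ne_finset_zero (s := hfinψ.toFinset)
    intro k hk
    rw [hstop0 k (by simpa using hk), Real.zero_rpow hq.ne']
  have htnn : 0 ≤ ∑' k, stopped ψ k ^ q :=
    tsum_nonneg fun k => Real.rpow_nonneg (stopped_nonneg ψ hψ k) q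
  have hrm : ∀ k, runMax ψ k ≤ S := runMax_le_sup ψ hψ hbstop
  have hT : ∑' k, stopped ψ k ^ q ≤ S ^ q / (1 - (2:ℝ) ^ (-q)) := by
    apply Summable.tsum_le_of_sum_le hsum
    intro s
    calc ∑ k ∈ s, stopped ψ k ^ q
        ≤ ∑ k ∈ Finset.range (s.sup id + 1), stopped ψ k ^ q := by
          apply Finset.sum_le_sum_of_subset_of_nonneg
          · intro i hi
            simp only [Finset.mem_range, Nat.lt_succ_iff]
            exact Finset.le_sup (f := id) hi
          · intro i _ _
            exact Real.rpow_nonneg (stopped_nonneg ψ hψ i) q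
      _ ≤ runMax ψ (s.sup id + 1) ^ q / (1 - (2:ℝ) ^ (-q)) := sum_bound ψ hψ hq _
      _ ≤ S ^ q / (1 - (2:ℝ) ^ (-q)) := by
          gcongr
          · exact runMax_nonneg ψ hψ _
          · exact hrm _
  refine ⟨⟨?_, ?_⟩, ?_, ?_⟩
  · apply ciSup_le
    intro k
    have h1 : stopped ψ k ^ q ≤ ∑' j, stopped ψ j ^ q :=
      Summable.le_tsum hsum k fun j _ => Real.rpow_nonneg (stopped_nonneg ψ hψ j) q
    calc stopped ψ k = (stopped ψ k ^ q) ^ (1 / q) := by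
          rw [one_div, Real.rpow_rpow_inv (stopped_nonneg ψ hψ k) hq.ne']
      _ ≤ (∑' j, stopped ψ j ^ q) ^ (1 / q) :=
          Real.rpow_le_rpow (Real.rpow_nonneg (stopped_nonneg ψ hψ k) q) h1 (by positivity)
  · calc (∑' k, stopped ψ k ^ q) ^ (1 / q)
        ≤ (S ^ q / (1 - (2:ℝ) ^ (-q))) ^ (1 / q) :=
          Real.rpow_le_rpow htnn hT (by positivity)
      _ = (1 - (2:ℝ) ^ (-q)) ^ (-(1 / q)) * S := by
          rw [Real.div_rpow (Real.rpow_nonneg hS0 q) hc'.le,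
            show (S ^ q) ^ (1 / q) = S by
              rw [one_div, Real.rpow_rpow_inv hS0 hq.ne'],
            Real.rpow_neg hc'.le, div_eq_mul_inv, mul_comm]
  · apply ciSup_le
    intro k
    exact le_trans (stopped_le ψ hψ k) (le_ciSup hbφ k)
  · apply ciSup_le
    intro k
    by_cases h : 2 * runMax ψ k < ψ k
    · have hs : stopped ψ k = ψ k := if_pos h
      have : ψ k ≤ S := hs ▸ le_ciSup hbstop k
      linarith
    · push_neg at h
      have := hrm k
      linarith
end
end
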